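/- Let X be the Turing machine recognizing (01)^n and Y the machine recognizing (10)^n (with transition rules as specified). Then 0110 is in neither L(X) nor L(Y), but 0110 ∈ L(OrchMach2({X, Y})): there is a computation of the orchestrated machine on input 0110 that halts, interleaving rules of X and Y. -/
import Mathlib


abbrev Stt := ℕ
abbrev Dir := Fin 3

def moveInt (d : Dir) : ℤ := (d.val : ℤ) - 1

abbrev Rule (Γ : Type) := (Stt × Γ) × (Stt × Γ × Dir)
abbrev Machine (Γ : Type) := Finset (Rule Γ)

structure Cfg (Γ : Type) where
  state : Stt
  tape : ℤ → Γ
  head : ℤ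

def Cfg.F {Γ : Type} (c : Cfg Γ) : Stt × Γ := (c.state, c.tape c.head)

def applyRule {Γ : Type} (c : Cfg Γ) (T : Stt × Γ × Dir) : Cfg Γ :=
  ⟨T.1, Function.update c.tape c.head T.2.1, c.head + moveInt T.2.2⟩

def applicable {Γ : Type} [DecidableEq Γ] (F : Stt × Γ) (G : Machine Γ) : Prop :=
  ∃ r ∈ G, r.1 = F

instance {Γ : Type} [DecidableEq Γ] (F : Stt × Γ) (G : Machine Γ) :
    Decidable (applicable F G) := by unfold applicable; infer_instance

def survivors {Γ : Type} [DecidableEq Γ] (p : Finset (Machine Γ) × Cfg Γ) :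
    Finset (Machine Γ) :=
  p.1.filter (fun G => applicable p.2.F G)

def OrchStep {Γ : Type} [DecidableEq Γ] (p q : Finset (Machine Γ) × Cfg Γ) : Prop :=
  ∃ G ∈ survivors p, ∃ T, (p.2.F, T) ∈ G ∧ q = (survivors p, applyRule p.2 T)

def RunFrom {Γ : Type} [DecidableEq Γ] (H : Finset (Machine Γ)) (c0 : Cfg Γ)
    (f : ℕ → Finset (Machine Γ) × Cfg Γ) (N : ℕ) : Prop :=
  f 0 = (H, c0) ∧ ∀ i < N, OrchStep (f i) (f (i + 1))

def HaltsAtFrom {Γ : Type} [DecidableEq Γ] (H : Finset (Machine Γ)) (c0 : Cfg Γ)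
    (f : ℕ → Finset (Machine Γ) × Cfg Γ) (N : ℕ) : Prop :=
  RunFrom H c0 f N ∧ survivors (f N) = ∅

abbrev Breed := Finset (Machine Bool)

def initCfg : Cfg Bool := ⟨0, fun _ => false, 0⟩

def Run (H : Breed) (f : ℕ → Breed × Cfg Bool) (N : ℕ) : Prop :=
  RunFrom H initCfg f N

def HaltsAt (H : Breed) (f : ℕ → Breed × Cfg Bool) (N : ℕ) : Prop :=
  HaltsAtFrom H initCfg f N

def Halts (H : Breed) : Prop := ∃ f N, HaltsAt H f N

def Divergent (H : Breed) : Prop := ∀ K : ℕ, ∃ f N, K ≤ N ∧ Run H f N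

def Convergent (H : Breed) : Prop :=
  ¬ ∃ f : ℕ → Breed × Cfg Bool, f 0 = (H, initCfg) ∧ ∀ i, OrchStep (f i) (f (i + 1))

def initCfg2 (w : List Bool) : Cfg (Option Bool) :=
  ⟨0, fun i => if i < 0 then none else w[i.toNat]?, 0⟩

abbrev Breed2 := Finset (Machine (Option Bool))

def Run2 (H : Breed2) (w : List Bool) (f : ℕ → Breed2 × Cfg (Option Bool)) (N : ℕ) : Prop :=
  RunFrom H (initCfg2 w) f N

def HaltsAt2 (H : Breed2) (w : List Bool) (f : ℕ → Breed2 × Cfg (Option Bool)) (N : ℕ) : Prop :=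
  HaltsAtFrom H (initCfg2 w) f N

def Lang2 (H : Breed2) : Set (List Bool) := {w | ∃ f N, HaltsAt2 H w f N}


/-- The machine `X` recognizing `(01)ⁿ`; state `2` plays the role of the
non-halting sink state `∞`. -/
def X : Machine (Option Bool) :=
  {((0, some false), (1, some false, (2 : Dir))),
   ((0, some true), (2, some true, (1 : Dir))),
   ((1, some true), (0, some true, (2 : Dir))),
   ((1, some false), (2, some true, (1 : Dir))),
   ((1, none), (2, some true, (1 : Dir))),
   ((2, some true), (2, some true, (1 : Dir)))}

/-- The machine `Y` recognizing `(10)ⁿ`; state `2` plays the role of `∞`. -/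
def Y : Machine (Option Bool) :=
  {((0, some true), (1, some true, (2 : Dir))),
   ((0, some false), (2, some true, (1 : Dir))),
   ((1, some false), (0, some false, (2 : Dir))),
   ((1, some true), (2, some true, (1 : Dir))),
   ((1, none), (2, some true, (1 : Dir))),
   ((2, some true), (2, some true, (1 : Dir)))}

/-- The input word `0110`. -/
def w0110 : List Bool := [false, true, true, false]
/-! ### Auxiliary material -/

namespace ZOOZ

def t0 : ℤ → Option Bool := (initCfg2 w0110).tape

/-- deterministic step extraction for a singleton breed -/
lemma orch_sing {M : Machine (Option Bool)} {c : Cfg (Option Bool)}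
    {q : Breed2 × Cfg (Option Bool)} (h : OrchStep (({M} : Breed2), c) q) :
    ∃ T, (c.F, T) ∈ M ∧ q = (survivors (({M} : Breed2), c), applyRule c T) := by
  obtain ⟨G, hG, T, hT, hq⟩ := h
  have hGM : G = M := by
    have := Finset.mem_of_mem_filter G hG
    simpa using this
  subst hGM
  exact ⟨T, hT, hq⟩

/-- the (forced) trajectory of `X` alone on `0110` -/
def gX : ℕ → Cfg (Option Bool)
  | 0 => initCfg2 w0110
  | 1 => ⟨1, Function.update t0 0 (some false), 1⟩
  | 2 => ⟨0, Function.update (Function.update t0 0 (some false)) 1 (some true), 2⟩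
  | _ + 3 => ⟨2, Function.update (Function.update (Function.update t0 0 (some false)) 1
      (some true)) 2 (some true), 2⟩

lemma gX_F0 : (gX 0).F = (0, some false) := by decide
lemma gX_F1 : (gX 1).F = (1, some true) := by decide
lemma gX_F2 : (gX 2).F = (0, some true) := by decide
lemma gX_F3 (n : ℕ) : (gX (n + 3)).F = (2, some true) := by
  show ((⟨2, Function.update (Function.update (Function.update t0 0 (some false)) 1
      (some true)) 2 (some true), 2⟩ : Cfg (Option Bool))).F = (2, some true)
  decide

lemma survivors_gX (i : ℕ) : survivors (({X} : Breed2), gX i) = {X} := by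
  unfold survivors
  rw [Finset.filter_true_of_mem]
  intro G hG
  rw [Finset.mem_singleton] at hG
  subst hG
  show applicable (gX i).F X
  match i with
  | 0 => rw [gX_F0]; decide
  | 1 => rw [gX_F1]; decide
  | 2 => rw [gX_F2]; decide
  | n + 3 => rw [gX_F3]; decide

lemma stepX {i : ℕ} {q : Breed2 × Cfg (Option Bool)}
    (h : OrchStep (({X} : Breed2), gX i) q) : q = (({X} : Breed2), gX (i + 1)) := by
  obtain ⟨T, hT, hq⟩ := orch_sing h
  rw [survivors_gX i] at hq
  match i with
  | 0 =>
      rw [gX_F0] at hT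
      simp only [X, Finset.mem_insert, Finset.mem_singleton, Prod.ext_iff] at hT
      simp at hT
      have hTeq : T = (1, some false, 2) := by
        cases T with | mk a b => cases b with | mk c d => simp_all
      subst hTeq
      rw [hq]
      refine Prod.ext rfl ?_
      show applyRule (gX 0) _ = gX 1
      simp [applyRule, gX, moveInt, t0, initCfg2]
  | 1 =>
      rw [gX_F1] at hT
      simp only [X, Finset.mem_insert, Finset.mem_singleton, Prod.ext_iff] at hT
      simp at hT
      have hTeq : T = (0, some true, 2) := by
        cases T with | mk a b => cases b with | mk c d => simp_all
      subst hTeq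
      rw [hq]
      refine Prod.ext rfl ?_
      show applyRule (gX 1) _ = gX 2
      simp [applyRule, gX, moveInt]
  | 2 =>
      rw [gX_F2] at hT
      simp only [X, Finset.mem_insert, Finset.mem_singleton, Prod.ext_iff] at hT
      simp at hT
      have hTeq : T = (2, some true, 1) := by
        cases T with | mk a b => cases b with | mk c d => simp_all
      subst hTeq
      rw [hq]
      refine Prod.ext rfl ?_
      show applyRule (gX 2) _ = gX 3
      simp [applyRule, gX, moveInt]
  | n + 3 =>
      rw [gX_F3] at hT
      simp only [X, Finset.mem_insert, Finset.mem_singleton, Prod.ext_iff] at hT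
      simp at hT
      have hTeq : T = (2, some true, 1) := by
        cases T with | mk a b => cases b with | mk c d => simp_all
      subst hTeq
      rw [hq]
      refine Prod.ext rfl ?_
      show applyRule (gX (n + 3)) _ = gX (n + 4)
      simp [applyRule, gX, moveInt, Function.update_idem]

lemma followX {f : ℕ → Breed2 × Cfg (Option Bool)} {N : ℕ}
    (h : RunFrom ({X} : Breed2) (initCfg2 w0110) f N) :
    ∀ i ≤ N, f i = (({X} : Breed2), gX i) := by
  intro i
  induction i with
  | zero => intro _; exact h.1
  | succ n ih =>
      intro hn
      have hstep := h.2 n (by omega)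
      rw [ih (by omega)] at hstep
      exact stepX hstep

end ZOOZ

namespace ZOOZ

/-- the (forced) trajectory of `Y` alone on `0110` -/
def gY : ℕ → Cfg (Option Bool)
  | 0 => initCfg2 w0110
  | _ + 1 => ⟨2, Function.update t0 0 (some true), 0⟩

lemma gY_F0 : (gY 0).F = (0, some false) := by decide
lemma gY_F1 (n : ℕ) : (gY (n + 1)).F = (2, some true) := by
  show ((⟨2, Function.update t0 0 (some true), 0⟩ : Cfg (Option Bool))).F = (2, some true)
  decide

lemma survivors_gY (i : ℕ) : survivors (({Y} : Breed2), gY i) = {Y} := by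
  unfold survivors
  rw [Finset.filter_true_of_mem]
  intro G hG
  rw [Finset.mem_singleton] at hG
  subst hG
  show applicable (gY i).F Y
  match i with
  | 0 => rw [gY_F0]; decide
  | n + 1 => rw [gY_F1]; decide

lemma stepY {i : ℕ} {q : Breed2 × Cfg (Option Bool)}
    (h : OrchStep (({Y} : Breed2), gY i) q) : q = (({Y} : Breed2), gY (i + 1)) := by
  obtain ⟨T, hT, hq⟩ := orch_sing h
  rw [survivors_gY i] at hq
  match i with
  | 0 =>
      rw [gY_F0] at hT
      simp only [Y, Finset.mem_insert, Finset.mem_singleton, Prod.ext_iff] at hT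
      simp at hT
      have hTeq : T = (2, some true, 1) := by
        cases T with | mk a b => cases b with | mk c d => simp_all
      subst hTeq
      rw [hq]
      refine Prod.ext rfl ?_
      show applyRule (gY 0) _ = gY 1
      simp [applyRule, gY, moveInt, t0, initCfg2]
  | n + 1 =>
      rw [gY_F1] at hT
      simp only [Y, Finset.mem_insert, Finset.mem_singleton, Prod.ext_iff] at hT
      simp at hT
      have hTeq : T = (2, some true, 1) := by
        cases T with | mk a b => cases b with | mk c d => simp_all
      subst hTeq
      rw [hq]
      refine Prod.ext rfl ?_
      show applyRule (gY (n + 1)) _ = gY (n + 2)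
      simp [applyRule, gY, moveInt, Function.update_idem]

lemma followY {f : ℕ → Breed2 × Cfg (Option Bool)} {N : ℕ}
    (h : RunFrom ({Y} : Breed2) (initCfg2 w0110) f N) :
    ∀ i ≤ N, f i = (({Y} : Breed2), gY i) := by
  intro i
  induction i with
  | zero => intro _; exact h.1
  | succ n ih =>
      intro hn
      have hstep := h.2 n (by omega)
      rw [ih (by omega)] at hstep
      exact stepY hstep

/-! ### The halting interleaved run of `{X, Y}` on `0110` -/

def d0 : Cfg (Option Bool) := initCfg2 w0110
def d1 : Cfg (Option Bool) := applyRule d0 (1, some false, 2)  -- rule of X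
def d2 : Cfg (Option Bool) := applyRule d1 (0, some true, 2)   -- rule of X
def d3 : Cfg (Option Bool) := applyRule d2 (1, some true, 2)   -- rule of Y
def d4 : Cfg (Option Bool) := applyRule d3 (0, some false, 2)  -- rule of Y

lemma d0_F : d0.F = (0, some false) := by decide
lemma d1_F : d1.F = (1, some true) := by decide
lemma d2_F : d2.F = (0, some true) := by decide
lemma d3_F : d3.F = (1, some false) := by decide
lemma d4_F : d4.F = (0, none) := by decide

def fP : ℕ → Breed2 × Cfg (Option Bool)
  | 0 => (({X, Y} : Breed2), d0)
  | 1 => (({X, Y} : Breed2), d1)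
  | 2 => (({X, Y} : Breed2), d2)
  | 3 => (({X, Y} : Breed2), d3)
  | _ + 4 => (({X, Y} : Breed2), d4)

lemma survP {c : Cfg (Option Bool)} (hx : applicable c.F X) (hy : applicable c.F Y) :
    survivors (({X, Y} : Breed2), c) = ({X, Y} : Breed2) := by
  unfold survivors
  rw [Finset.filter_true_of_mem]
  intro G hG
  rw [Finset.mem_insert, Finset.mem_singleton] at hG
  rcases hG with h | h <;> subst h
  · exact hx
  · exact hy

lemma survP0 : survivors (fP 0) = ({X, Y} : Breed2) := by
  show survivors (({X, Y} : Breed2), d0) = _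
  exact survP (by rw [d0_F]; decide) (by rw [d0_F]; decide)

lemma survP1 : survivors (fP 1) = ({X, Y} : Breed2) := by
  show survivors (({X, Y} : Breed2), d1) = _
  exact survP (by rw [d1_F]; decide) (by rw [d1_F]; decide)

lemma survP2 : survivors (fP 2) = ({X, Y} : Breed2) := by
  show survivors (({X, Y} : Breed2), d2) = _
  exact survP (by rw [d2_F]; decide) (by rw [d2_F]; decide)

lemma survP3 : survivors (fP 3) = ({X, Y} : Breed2) := by
  show survivors (({X, Y} : Breed2), d3) = _
  exact survP (by rw [d3_F]; decide) (by rw [d3_F]; decide)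

lemma survP4 : survivors (fP 4) = ∅ := by
  show survivors (({X, Y} : Breed2), d4) = ∅
  unfold survivors
  rw [Finset.filter_false_of_mem]
  intro G hG
  rw [Finset.mem_insert, Finset.mem_singleton] at hG
  rcases hG with h | h <;> subst h <;> rw [show (({X,Y} : Breed2), d4).2.F = (0, none) from d4_F] <;>
    decide

lemma haltP : HaltsAt2 ({X, Y} : Breed2) w0110 fP 4 := by
  refine ⟨⟨rfl, ?_⟩, survP4⟩
  intro i hi
  interval_cases i
  · exact ⟨X, by rw [survP0]; exact Finset.mem_insert_self _ _,
      (1, some false, 2), by rw [show (fP 0).2.F = (0, some false) from d0_F]; decide,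
      by rw [survP0]; rfl⟩
  · exact ⟨X, by rw [survP1]; exact Finset.mem_insert_self _ _,
      (0, some true, 2), by rw [show (fP 1).2.F = (1, some true) from d1_F]; decide,
      by rw [survP1]; rfl⟩
  · exact ⟨Y, by rw [survP2]; exact Finset.mem_insert.2 (Or.inr (Finset.mem_singleton_self _)),
      (1, some true, 2), by rw [show (fP 2).2.F = (0, some true) from d2_F]; decide,
      by rw [survP2]; rfl⟩
  · exact ⟨Y, by rw [survP3]; exact Finset.mem_insert.2 (Or.inr (Finset.mem_singleton_self _)),
      (0, some false, 2), by rw [show (fP 3).2.F = (1, some false) from d3_F]; decide,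
      by rw [survP3]; rfl⟩

end ZOOZ

/-- `0110` is in neither `L(X)` nor `L(Y)`, but
`0110 ∈ L(OrchMach2({X, Y}))`: some computation of the orchestrated machine on
input `0110`, interleaving rules of `X` and `Y`, halts. -/
theorem zero_one_one_zero :
    w0110 ∉ Lang2 {X} ∧ w0110 ∉ Lang2 {Y} ∧ w0110 ∈ Lang2 ({X, Y} : Breed2) := by
  refine ⟨?_, ?_, ⟨ZOOZ.fP, 4, ZOOZ.haltP⟩⟩
  · rintro ⟨f, N, hrun, hhalt⟩
    rw [ZOOZ.followX hrun N le_rfl, ZOOZ.survivors_gX] at hhalt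
    exact Finset.singleton_ne_empty _ hhalt
  · rintro ⟨f, N, hrun, hhalt⟩
    rw [ZOOZ.followY hrun N le_rfl, ZOOZ.survivors_gY] at hhalt
    exact Finset.singleton_ne_empty _ hhalt
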